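/- Let R be a unital associative ℝ-algebra, let a, τ, q ∈ ℝ, and let w, v ∈ R satisfy the C_{L,a}-relations: w²v = a•w − q•(v w²) + τ•(w v w) and w v² = a•v − q•(v² w) + τ•(v w v). Set d = w·v and d̃ = v·w, and define 𝕃̂ : R × R → R × R by 𝕃̂(x, y) = (τ•x − q•y + a•1, x). Then for all natural numbers n, i, j, writing (Xₙ, Yₙ) = 𝕃̂^[n](d, d̃), one has wⁿ · dⁱ · d̃ʲ = Xₙⁱ · Yₙʲ · wⁿ and dⁱ · d̃ʲ · vⁿ = vⁿ · Xₙⁱ · Yₙʲ. -/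
import Mathlib


/-- reordering formula in `C_{L,a}` for monomials `p(x,y) = xⁱ yʲ`:
`wⁿ dⁱ d'ʲ = Xₙⁱ Yₙʲ wⁿ` and `dⁱ d'ʲ vⁿ = vⁿ Xₙⁱ Yₙʲ` where `(Xₙ, Yₙ) = 𝕃̂^[n](d, d')`.
Here `d = w v` and `d'` denotes d̃ = v w. -/
theorem stmt_3 (R : Type*) [Ring R] [Algebra ℝ R]
    (a τ q : ℝ) (w v : R)
    (h1 : w * w * v = a • w - q • (v * w * w) + τ • (w * v * w))
    (h2 : w * v * v = a • v - q • (v * v * w) + τ • (v * w * v))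
    (d d' : R) (hd : d = w * v) (hd' : d' = v * w)
    (L : R × R → R × R)
    (hL : L = fun p => (τ • p.1 - q • p.2 + a • (1 : R), p.1)) :
    ∀ n i j : ℕ,
      w ^ n * d ^ i * d' ^ j = (L^[n] (d, d')).1 ^ i * (L^[n] (d, d')).2 ^ j * w ^ n ∧
      d ^ i * d' ^ j * v ^ n = v ^ n * ((L^[n] (d, d')).1 ^ i * (L^[n] (d, d')).2 ^ j) := by
  -- notation
  set X : ℕ → R := fun n => (L^[n] (d, d')).1 with hX
  set Y : ℕ → R := fun n => (L^[n] (d, d')).2 with hY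
  have hXs : ∀ n, X (n + 1) = τ • X n - q • Y n + a • (1 : R) := by
    intro n
    simp only [hX, hY, Function.iterate_succ_apply', hL]
  have hYs : ∀ n, Y (n + 1) = X n := by
    intro n
    simp only [hX, hY, Function.iterate_succ_apply', hL]
  have hX0 : X 0 = d := rfl
  have hY0 : Y 0 = d' := rfl
  -- key commutation relations
  have key : ∀ n, w * X n = X (n + 1) * w ∧ w * Y n = Y (n + 1) * w ∧
      X n * v = v * X (n + 1) ∧ Y n * v = v * Y (n + 1) := by
    intro n
    induction n with
    | zero =>
      refine ⟨?_, ?_, ?_, ?_⟩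
      · rw [hX0, hXs, hX0, hY0, hd, hd', ← mul_assoc, h1, add_mul, sub_mul,
          smul_mul_assoc, smul_mul_assoc, smul_mul_assoc, one_mul, mul_assoc, mul_assoc]
        abel
      · rw [hY0, hYs, hX0, hd, hd', mul_assoc]
      · rw [hX0, hXs, hX0, hY0, hd, hd', h2, mul_add, mul_sub,
          mul_smul_comm, mul_smul_comm, mul_smul_comm, mul_one, mul_assoc, mul_assoc]
        abel
      · rw [hY0, hYs, hX0, hd, hd', mul_assoc]
    | succ n ih =>
      obtain ⟨ih1, ih2, ih3, ih4⟩ := ih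
      refine ⟨?_, ?_, ?_, ?_⟩
      · rw [hXs, hXs, mul_add, mul_sub, mul_smul_comm, mul_smul_comm, mul_smul_comm,
          mul_one, ih1, ih2, add_mul, sub_mul, smul_mul_assoc, smul_mul_assoc,
          smul_mul_assoc, one_mul]
      · rw [hYs, hYs, ih1]
      · rw [hXs, hXs, add_mul, sub_mul, smul_mul_assoc, smul_mul_assoc, smul_mul_assoc,
          one_mul, ih3, ih4, mul_add, mul_sub, mul_smul_comm, mul_smul_comm,
          mul_smul_comm, mul_one]
      · rw [hYs, hYs, ih3]
  -- power versions
  have pw : ∀ (x x' : R), w * x = x' * w → ∀ i : ℕ, w * x ^ i = x' ^ i * w := by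
    intro x x' h i
    induction i with
    | zero => simp
    | succ i ih =>
      rw [pow_succ, pow_succ, ← mul_assoc, ih, mul_assoc, h, ← mul_assoc]
  have pv : ∀ (x x' : R), x * v = v * x' → ∀ i : ℕ, x ^ i * v = v * x' ^ i := by
    intro x x' h i
    induction i with
    | zero => simp
    | succ i ih =>
      rw [pow_succ, pow_succ, mul_assoc, h, ← mul_assoc, ih, mul_assoc]
  -- main induction on n
  intro n
  induction n with
  | zero => intro i j; constructor <;> simp [hX0, hY0, mul_assoc]
  | succ n ih =>
    intro i j
    obtain ⟨ih1, ih2⟩ := ih i j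
    obtain ⟨k1, k2, k3, k4⟩ := key n
    constructor
    · calc w ^ (n + 1) * d ^ i * d' ^ j
          = w * (w ^ n * d ^ i * d' ^ j) := by rw [pow_succ']; noncomm_ring
        _ = w * (X n ^ i * (Y n ^ j * w ^ n)) := by rw [ih1, mul_assoc]
        _ = (w * X n ^ i) * (Y n ^ j * w ^ n) := by rw [mul_assoc]
        _ = X (n+1) ^ i * ((w * Y n ^ j) * w ^ n) := by
            rw [pw _ _ k1]; noncomm_ring
        _ = X (n+1) ^ i * (Y (n+1) ^ j * (w * w ^ n)) := by
            rw [pw _ _ k2]; noncomm_ring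
        _ = X (n+1) ^ i * Y (n+1) ^ j * w ^ (n+1) := by rw [pow_succ']; noncomm_ring
    · calc d ^ i * d' ^ j * v ^ (n + 1)
          = (d ^ i * d' ^ j * v ^ n) * v := by rw [pow_succ]; noncomm_ring
        _ = v ^ n * (X n ^ i * (Y n ^ j * v)) := by rw [ih2]; noncomm_ring
        _ = v ^ n * (X n ^ i * (v * Y (n+1) ^ j)) := by rw [pv _ _ k4]
        _ = v ^ n * ((X n ^ i * v) * Y (n+1) ^ j) := by noncomm_ring
        _ = v ^ n * (v * (X (n+1) ^ i * Y (n+1) ^ j)) := by rw [pv _ _ k3]; noncomm_ring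
        _ = v ^ (n+1) * (X (n+1) ^ i * Y (n+1) ^ j) := by rw [pow_succ]; noncomm_ring
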